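/- For every integer ℓ ≥ 3, a finite simple graph G contains P_ℓ as a contraction if and only if G has a P_ℓ-suitable pair, i.e., a pair of vertices (u, v) of G for which G has a P_ℓ-witness structure W with W(p_1) = {u} and W(p_ℓ) = {v}. -/

import Mathlib

/-- `W` is an `H`-witness structure of `G`: a family of pairwise disjoint nonempty
connected subsets of `V(G)` covering `V(G)` such that distinct `h₁ h₂` are adjacent in `H`
iff there is an edge of `G` between `W h₁` and `W h₂`. -/
def IsWitnessStructure {V U : Type*} (G : SimpleGraph V) (H : SimpleGraph U)
    (W : U → Set V) : Prop :=
  (∀ h, (W h).Nonempty) ∧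
  (∀ h₁ h₂, h₁ ≠ h₂ → Disjoint (W h₁) (W h₂)) ∧
  (⋃ h, W h) = Set.univ ∧
  (∀ h, (G.induce (W h)).Connected) ∧
  (∀ h₁ h₂, h₁ ≠ h₂ → ((∃ a ∈ W h₁, ∃ b ∈ W h₂, G.Adj a b) ↔ H.Adj h₁ h₂))

/-- `G` contains `H` as a contraction. -/
def ContainsAsContraction {V U : Type*} (G : SimpleGraph V) (H : SimpleGraph U) : Prop :=
  ∃ W : U → Set V, IsWitnessStructure G H W

open SimpleGraph

def homOfLe {V : Type*} (G : SimpleGraph V) {s t : Set V} (h : s ⊆ t) :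
    G.induce s →g G.induce t :=
  ⟨fun x => ⟨x.1, h x.2⟩, fun {a b} hab => hab⟩

lemma reach_mono {V : Type*} (G : SimpleGraph V) {s t : Set V} (h : s ⊆ t)
    {x y : ↥s} (hr : (G.induce s).Reachable x y) :
    (G.induce t).Reachable ⟨x.1, h x.2⟩ ⟨y.1, h y.2⟩ :=
  hr.map (homOfLe G h)

lemma witness_relabel {V U U' : Type*} (G : SimpleGraph V) {H : SimpleGraph U}
    {H' : SimpleGraph U'} (e : H ≃g H') {W : U → Set V}
    (hW : IsWitnessStructure G H W) :
    IsWitnessStructure G H' (fun i => W (e.symm i)) := by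
  obtain ⟨h1, h2, h3, h4, h5⟩ := hW
  refine ⟨fun i => h1 _, fun i j hij => h2 _ _ ?_, ?_, fun i => h4 _, fun i j hij => ?_⟩
  · intro h
    apply hij
    have := congrArg e h
    simpa using this
  · ext v
    simp only [Set.mem_iUnion, Set.mem_univ, iff_true]
    have : v ∈ ⋃ h, W h := h3 ▸ Set.mem_univ v
    obtain ⟨j, hj⟩ := Set.mem_iUnion.mp this
    exact ⟨e j, by simpa using hj⟩
  · have hne : e.symm i ≠ e.symm j := fun h => hij (by
      have := congrArg e h; simpa using this)
    rw [h5 _ _ hne]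
    exact e.symm.map_adj_iff

lemma exists_noncut {V : Type} [Fintype V] (G : SimpleGraph V) (hG : G.Connected) (a : V)
    (h2 : ∃ b, b ≠ a) : ∃ u, u ≠ a ∧ (G.induce ({u}ᶜ : Set V)).Connected := by
  classical
  obtain ⟨u, -, hu⟩ := Finset.exists_max_image Finset.univ (fun x => G.dist x a)
    ⟨a, Finset.mem_univ a⟩
  have hu' : ∀ x, G.dist x a ≤ G.dist u a := fun x => hu x (Finset.mem_univ x)
  obtain ⟨b, hb⟩ := h2
  have hdb : 0 < G.dist b a := hG.pos_dist_of_ne hb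
  have hua : u ≠ a := by
    intro h
    have := hu' b
    rw [h, SimpleGraph.dist_self] at this
    omega
  have hau : a ∈ ({u}ᶜ : Set V) := by simp [Ne.symm hua]
  refine ⟨u, hua, ?_⟩
  have key : ∀ n (x : V) (hx : x ≠ u), G.dist x a ≤ n →
      (G.induce ({u}ᶜ : Set V)).Reachable ⟨x, by simp [hx]⟩ ⟨a, hau⟩ := by
    intro n
    induction n with
    | zero =>
      intro x hx hd
      have : x = a := hG.dist_eq_zero_iff.mp (Nat.le_zero.mp hd)
      subst this; rfl
    | succ n ih =>
      intro x hx hd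
      by_cases hxa : x = a
      · subst hxa; rfl
      · obtain ⟨p, hp⟩ := hG.exists_walk_length_eq_dist x a
        cases p with
        | nil => exact absurd rfl hxa
        | @cons _ y _ hadj q =>
          have hq : q.length = G.dist x a - 1 := by
            simp [Walk.length_cons] at hp; omega
          have hdy : G.dist y a ≤ G.dist x a - 1 := hq ▸ SimpleGraph.dist_le q
          have hdx : 0 < G.dist x a := hG.pos_dist_of_ne hxa
          have hyu : y ≠ u := by
            intro h; subst h
            have := hu' x; omega
          have step : (G.induce ({u}ᶜ : Set V)).Adj ⟨x, by simp [hx]⟩ ⟨y, by simp [hyu]⟩ :=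
            hadj
          exact (step.reachable).trans (ih y hyu (by omega))
  rw [SimpleGraph.connected_iff]
  constructor
  · rintro ⟨x, hx⟩ ⟨y, hy⟩
    have hx' : x ≠ u := by simpa using hx
    have hy' : y ≠ u := by simpa using hy
    exact (key _ x hx' le_rfl).trans (key _ y hy' le_rfl).symm
  · exact ⟨⟨a, hau⟩⟩

lemma shrink {V : Type} [Fintype V] (G : SimpleGraph V) {ℓ : ℕ} (hℓ : 2 < ℓ)
    {W : Fin ℓ → Set V} (hW : IsWitnessStructure G (SimpleGraph.pathGraph ℓ) W) :
    ∃ (u : V) (W' : Fin ℓ → Set V), IsWitnessStructure G (SimpleGraph.pathGraph ℓ) W' ∧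
      W' ⟨0, by omega⟩ = {u} ∧ ∀ i : Fin ℓ, 2 ≤ i.val → W' i = W i := by
  classical
  obtain ⟨hne, hdisj, hcover, hconn, hedge⟩ := hW
  set i0 : Fin ℓ := ⟨0, by omega⟩ with hi0
  set i1 : Fin ℓ := ⟨1, by omega⟩ with hi1
  have hne01 : i0 ≠ i1 := by simp [hi0, hi1, Fin.ext_iff]
  have hadj01 : (SimpleGraph.pathGraph ℓ).Adj i0 i1 := by
    rw [pathGraph_adj]; left; rfl
  obtain ⟨a, haS, b, hb1, hab⟩ := (hedge i0 i1 hne01).mpr hadj01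
  by_cases hsub : W i0 ⊆ {a}
  · -- W i0 is already a singleton
    have h0 : W i0 = {a} := Set.Subset.antisymm hsub (Set.singleton_subset_iff.mpr haS)
    exact ⟨a, W, ⟨hne, hdisj, hcover, hconn, hedge⟩, h0, fun i _ => rfl⟩
  · obtain ⟨x, hxS, hxa⟩ : ∃ x ∈ W i0, x ≠ a := by
      by_contra h; push_neg at h
      exact hsub fun y hy => h y hy
    haveI : Fintype ↥(W i0) := Set.Finite.fintype (Set.toFinite _)
    obtain ⟨u', hu'a, hcut⟩ := exists_noncut (G.induce (W i0)) (hconn i0) ⟨a, haS⟩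
      ⟨⟨x, hxS⟩, by simp [Subtype.ext_iff, hxa]⟩
    set u : V := u'.1 with hu
    have huS : u ∈ W i0 := u'.2
    have hua : u ≠ a := fun h => hu'a (Subtype.ext h)
    -- transfer connectivity to W i0 \ {u}
    have iso : ((G.induce (W i0)).induce ({u'}ᶜ : Set ↥(W i0))) ≃g
        G.induce (W i0 \ {u}) := by
      refine ⟨⟨fun x => ⟨x.1.1, x.1.2, ?_⟩, fun y => ⟨⟨y.1, y.2.1⟩, ?_⟩, ?_, ?_⟩, ?_⟩
      · intro h
        exact x.2 (Subtype.ext h)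
      · intro h
        rw [Set.mem_singleton_iff] at h
        exact y.2.2 (congrArg Subtype.val h)
      · intro x; ext; rfl
      · intro y; ext; rfl
      · intro x y; exact Iff.rfl
    have hconn' : (G.induce (W i0 \ {u})).Connected := iso.connected_iff.mp hcut
    have hadm : a ∈ W i0 \ {u} := ⟨haS, fun h => hua (by simpa using h.symm)⟩
    -- u has a neighbour w in W i0 \ {u}
    obtain ⟨w, hwm, huw⟩ : ∃ w ∈ W i0 \ {u}, G.Adj u w := by
      obtain ⟨p⟩ := (hconn i0).preconnected u' ⟨a, haS⟩
      cases p with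
      | nil => exact absurd rfl hu'a
      | @cons _ y _ hadj q =>
        have : G.Adj u y.1 := hadj
        exact ⟨y.1, ⟨y.2, fun h => this.ne (by simpa using h.symm)⟩, this⟩
    -- the new witness structure
    set W' : Fin ℓ → Set V := fun i =>
      if i = i0 then {u} else if i = i1 then W i1 ∪ (W i0 \ {u}) else W i with hW'
    have hW'0 : W' i0 = {u} := by simp [hW']
    have hW'1 : W' i1 = W i1 ∪ (W i0 \ {u}) := by simp [hW', Ne.symm hne01]
    have hW'o : ∀ i, i ≠ i0 → i ≠ i1 → W' i = W i := by
      intro i h1 h2; simp [hW', h1, h2]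
    refine ⟨u, W', ⟨?_, ?_, ?_, ?_, ?_⟩, hW'0, ?_⟩
    · -- nonempty
      intro i
      by_cases h1 : i = i0
      · subst h1; rw [hW'0]; exact ⟨u, rfl⟩
      by_cases h2 : i = i1
      · subst h2; rw [hW'1]; exact ⟨b, Or.inl hb1⟩
      · rw [hW'o i h1 h2]; exact hne i
    · -- disjoint
      intro i j hij
      rw [Set.disjoint_left]
      intro v hvi hvj
      have main : ∀ i j (hij : i ≠ j) (v : V), i ≠ i0 → v ∈ W' i → v ∈ W' j → False := by
        intro i j hij v h1 hvi hvj
        by_cases h3 : i = i1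
        · subst h3
          rw [hW'1] at hvi
          by_cases h2 : j = i0
          · subst h2
            rw [hW'0] at hvj
            rcases hvi with h | h
            · exact (Set.disjoint_left.mp (hdisj i0 i1 hne01)) (hvj ▸ huS) h
            · exact h.2 hvj
          · rw [hW'o j h2 (Ne.symm hij)] at hvj
            rcases hvi with h | h
            · exact (Set.disjoint_left.mp (hdisj i1 j hij)) h hvj
            · exact (Set.disjoint_left.mp (hdisj i0 j (Ne.symm h2))) h.1 hvj
        · rw [hW'o i h1 h3] at hvi
          by_cases h2 : j = i0
          · subst h2
            rw [hW'0] at hvj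
            exact (Set.disjoint_left.mp (hdisj i i0 h1)) hvi (hvj ▸ huS)
          by_cases h4 : j = i1
          · subst h4
            rw [hW'1] at hvj
            rcases hvj with h | h
            · exact (Set.disjoint_left.mp (hdisj i i1 h3)) hvi h
            · exact (Set.disjoint_left.mp (hdisj i i0 h1)) hvi h.1
          · rw [hW'o j h2 h4] at hvj
            exact (Set.disjoint_left.mp (hdisj i j hij)) hvi hvj
      by_cases h1 : i = i0
      · exact main j i (Ne.symm hij) v (h1 ▸ Ne.symm hij) hvj hvi
      · exact main i j hij v h1 hvi hvj
    · -- cover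
      ext v
      simp only [Set.mem_iUnion, Set.mem_univ, iff_true]
      have : v ∈ ⋃ h, W h := hcover ▸ Set.mem_univ v
      obtain ⟨j, hj⟩ := Set.mem_iUnion.mp this
      by_cases h1 : j = i0
      · subst h1
        by_cases hvu : v = u
        · exact ⟨i0, by rw [hW'0]; exact hvu⟩
        · exact ⟨i1, by rw [hW'1]; exact Or.inr ⟨hj, hvu⟩⟩
      by_cases h2 : j = i1
      · subst h2; exact ⟨i1, by rw [hW'1]; exact Or.inl hj⟩
      · exact ⟨j, by rw [hW'o j h1 h2]; exact hj⟩
    · -- connected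
      intro i
      by_cases h1 : i = i0
      · subst h1
        rw [hW'0, SimpleGraph.connected_iff]
        constructor
        · rintro ⟨p, hp⟩ ⟨q, hq⟩
          have : p = q := hp.trans hq.symm
          subst this; rfl
        · exact ⟨⟨u, rfl⟩⟩
      by_cases h2 : i = i1
      · subst h2
        rw [hW'1]
        set T : Set V := W i1 ∪ (W i0 \ {u}) with hT
        have hsub1 : W i1 ⊆ T := Set.subset_union_left
        have hsub0 : W i0 \ {u} ⊆ T := Set.subset_union_right
        have hbT : b ∈ T := hsub1 hb1
        have haT : a ∈ T := hsub0 hadm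
        have habT : (G.induce T).Adj ⟨a, haT⟩ ⟨b, hbT⟩ := hab
        have key : ∀ v (hv : v ∈ T), (G.induce T).Reachable ⟨v, hv⟩ ⟨b, hbT⟩ := by
          intro v hv
          rcases hv with h | h
          · exact reach_mono G hsub1
              ((hconn i1).preconnected ⟨v, h⟩ ⟨b, hb1⟩)
          · exact (reach_mono G hsub0 (hconn'.preconnected ⟨v, h⟩ ⟨a, hadm⟩)).trans
              habT.reachable
        rw [SimpleGraph.connected_iff]
        exact ⟨fun x y => (key x.1 x.2).trans (key y.1 y.2).symm, ⟨⟨b, hbT⟩⟩⟩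
      · rw [hW'o i h1 h2]; exact hconn i
    · -- edge condition
      intro i j hij
      have hp0 : ∀ k : Fin ℓ, (SimpleGraph.pathGraph ℓ).Adj i0 k ↔ k = i1 := by
        intro k
        rw [pathGraph_adj]
        constructor
        · rintro (h | h) <;> simp_all [hi0, hi1, Fin.ext_iff] <;> omega
        · rintro rfl; left; rfl
      constructor
      · rintro ⟨p, hp, q, hq, hpq⟩
        by_cases h1 : i = i0
        · subst h1
          rw [hW'0] at hp
          by_cases h4 : j = i1
          · subst h4; exact hadj01
          · rw [hW'o j (Ne.symm hij) h4] at hq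
            exact (hedge i0 j hij).mp ⟨u, huS, q, hq, hp ▸ hpq⟩
        by_cases h3 : i = i1
        · subst h3
          rw [hW'1] at hp
          by_cases h2 : j = i0
          · subst h2; exact hadj01.symm
          · rw [hW'o j h2 (Ne.symm hij)] at hq
            rcases hp with h | h
            · exact (hedge i1 j hij).mp ⟨p, h, q, hq, hpq⟩
            · exact absurd ((hp0 j).mp ((hedge i0 j (Ne.symm h2)).mp
                ⟨p, h.1, q, hq, hpq⟩)) (Ne.symm hij)
        · rw [hW'o i h1 h3] at hp
          by_cases h2 : j = i0
          · subst h2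
            rw [hW'0] at hq
            exact ((hedge i0 i (Ne.symm hij)).mp ⟨u, huS, p, hp, hq ▸ hpq.symm⟩).symm
          by_cases h4 : j = i1
          · subst h4
            rw [hW'1] at hq
            rcases hq with h | h
            · exact (hedge i i1 hij).mp ⟨p, hp, q, h, hpq⟩
            · exact absurd ((hp0 i).mp ((hedge i0 i (Ne.symm h1)).mp
                ⟨q, h.1, p, hp, hpq.symm⟩)) h3
          · rw [hW'o j h2 h4] at hq
            exact (hedge i j hij).mp ⟨p, hp, q, hq, hpq⟩
      · intro hadj
        by_cases h1 : i = i0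
        · subst h1
          have h4 : j = i1 := (hp0 j).mp hadj
          subst h4
          exact ⟨u, by rw [hW'0]; rfl, w, by rw [hW'1]; exact Or.inr hwm, huw⟩
        by_cases h3 : i = i1
        · subst h3
          by_cases h2 : j = i0
          · subst h2
            exact ⟨w, by rw [hW'1]; exact Or.inr hwm, u, by rw [hW'0]; rfl, huw.symm⟩
          · obtain ⟨p, hp, q, hq, hpq⟩ := (hedge i1 j hij).mpr hadj
            exact ⟨p, by rw [hW'1]; exact Or.inl hp, q,
              by rw [hW'o j h2 (Ne.symm hij)]; exact hq, hpq⟩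
        · by_cases h2 : j = i0
          · subst h2
            have : i = i1 := (hp0 i).mp hadj.symm
            exact absurd this h3
          by_cases h4 : j = i1
          · subst h4
            obtain ⟨p, hp, q, hq, hpq⟩ := (hedge i i1 hij).mpr hadj
            exact ⟨p, by rw [hW'o i h1 h3]; exact hp, q, by rw [hW'1]; exact Or.inl hq, hpq⟩
          · obtain ⟨p, hp, q, hq, hpq⟩ := (hedge i j hij).mpr hadj
            exact ⟨p, by rw [hW'o i h1 h3]; exact hp, q, by rw [hW'o j h2 h4]; exact hq, hpq⟩
    · -- unchanged for i ≥ 2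
      intro i hi
      have h1 : i ≠ i0 := by simp [hi0, Fin.ext_iff]; omega
      have h2 : i ≠ i1 := by simp [hi1, Fin.ext_iff]; omega
      exact hW'o i h1 h2

def revIso (ℓ : ℕ) : SimpleGraph.pathGraph ℓ ≃g SimpleGraph.pathGraph ℓ where
  toEquiv := Fin.revPerm
  map_rel_iff' := by
    intro a b
    have ha := a.isLt
    have hb := b.isLt
    simp only [Fin.revPerm_apply, pathGraph_adj, Fin.val_rev]
    omega

theorem stmt_1 {V : Type} [Fintype V] (G : SimpleGraph V) (ℓ : ℕ) (hℓ : 3 ≤ ℓ) :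
    ContainsAsContraction G (SimpleGraph.pathGraph ℓ) ↔
      ∃ u v : V, ∃ W : Fin ℓ → Set V,
        IsWitnessStructure G (SimpleGraph.pathGraph ℓ) W ∧
        W ⟨0, by omega⟩ = {u} ∧ W ⟨ℓ - 1, by omega⟩ = {v} := by
  constructor
  · rintro ⟨W, hW⟩
    obtain ⟨u, W1, hW1, hW10, -⟩ := shrink G hℓ hW
    have h2 := witness_relabel G (revIso ℓ) hW1
    obtain ⟨v, W2r, hW2r, hW2r0, hW2rh⟩ := shrink G hℓ h2
    have h3 := witness_relabel G (revIso ℓ) hW2r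
    refine ⟨u, v, _, h3, ?_, ?_⟩
    · show W2r ((revIso ℓ).symm ⟨0, by omega⟩) = {u}
      have hrev : (revIso ℓ).symm ⟨0, by omega⟩ = ⟨ℓ - 1, by omega⟩ := by
        ext
        simp [revIso, Fin.val_rev] <;> omega
      rw [hrev, hW2rh ⟨ℓ - 1, by omega⟩ (by simp; omega)]
      show W1 ((revIso ℓ).symm ⟨ℓ - 1, by omega⟩) = {u}
      have hrev2 : (revIso ℓ).symm ⟨ℓ - 1, by omega⟩ = ⟨0, by omega⟩ := by
        ext
        simp [revIso, Fin.val_rev] <;> omega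
      rw [hrev2, hW10]
    · show W2r ((revIso ℓ).symm ⟨ℓ - 1, by omega⟩) = {v}
      have hrev : (revIso ℓ).symm ⟨ℓ - 1, by omega⟩ = ⟨0, by omega⟩ := by
        ext
        simp [revIso, Fin.val_rev] <;> omega
      rw [hrev, hW2r0]
  · rintro ⟨u, v, W, hW, -, -⟩
    exact ⟨W, hW⟩
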